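/- Let G be a group with elements g₁,…,g₅ and integers t_{ijk} (1 ≤ i < j < k ≤ 5) satisfying the listed commutator relations, and assume t₁₂₃·t₃₄₅ = 0. Then for every integer y, the conjugate g₁^{-y} g₂ g₁^{y} equals g₂ · g₃^{r(y)} · g₄^{s(y)} · g₅^{t(y)}, where r(y) = y t₁₂₃, s(y) = y t₁₂₄ + s₂(y) t₁₂₃ t₁₃₄, and t(y) = y t₁₂₅ + s₂(y)(t₁₂₃ t₁₃₅ + t₁₂₄ t₁₄₅) + s₃(y) t₁₂₃ t₁₃₄ t₁₄₅. -/

import Mathlib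

/-- `s₂(x) = x(x-1)/2` -/
def s2 (x : ℤ) : ℤ := x * (x - 1) / 2

/-- `s₃(x) = x(x-1)(x-2)/6` -/
def s3 (x : ℤ) : ℤ := x * (x - 1) * (x - 2) / 6

/-- Conjugation formula `g₂^{g₁^y} = g₂ g₃^{r(y)} g₄^{s(y)} g₅^{t(y)}` with
`r(y) = y t₁₂₃`, `s(y) = y t₁₂₄ + s₂(y) t₁₂₃ t₁₃₄` and
`t(y) = y t₁₂₅ + s₂(y)(t₁₂₃ t₁₃₅ + t₁₂₄ t₁₄₅) + s₃(y) t₁₂₃ t₁₃₄ t₁₄₅`,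
assuming `t₁₂₃ t₃₄₅ = 0`. -/
lemma two_dvd_ (n : ℤ) : (2:ℤ) ∣ n * (n-1) := by
  have h : ((2:ℕ):ℤ) ∣ n * (n-1) := by
    rw [← ZMod.intCast_zmod_eq_zero_iff_dvd]
    push_cast
    have : ∀ m : ZMod 2, m * (m - 1) = 0 := by decide
    exact this n
  exact_mod_cast h

lemma six_dvd_ (n : ℤ) : (6:ℤ) ∣ n * (n-1) * (n-2) := by
  have h : ((6:ℕ):ℤ) ∣ n * (n-1) * (n-2) := by
    rw [← ZMod.intCast_zmod_eq_zero_iff_dvd]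
    push_cast
    have : ∀ m : ZMod 6, m * (m - 1) * (m - 2) = 0 := by decide
    exact this n
  exact_mod_cast h

lemma s2_mul (n : ℤ) : s2 n * 2 = n * (n-1) := Int.ediv_mul_cancel (two_dvd_ n)
lemma s3_mul (n : ℤ) : s3 n * 6 = n * (n-1) * (n-2) := Int.ediv_mul_cancel (six_dvd_ n)

lemma s2_succ (n : ℤ) : s2 (n+1) = s2 n + n := by
  have h2 : s2 (n+1) * 2 = (s2 n + n) * 2 := by
    rw [s2_mul]; linear_combination -s2_mul n
  exact mul_right_cancel₀ two_ne_zero h2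

lemma s2_pred (n : ℤ) : s2 (n-1) = s2 n - (n-1) := by
  have h2 : s2 (n-1) * 2 = (s2 n - (n-1)) * 2 := by
    rw [s2_mul]; linear_combination -s2_mul n
  exact mul_right_cancel₀ two_ne_zero h2

lemma s3_succ (n : ℤ) : s3 (n+1) = s3 n + s2 n := by
  have h6 : s3 (n+1) * 6 = (s3 n + s2 n) * 6 := by
    rw [s3_mul]; linear_combination -s3_mul n - 3 * s2_mul n
  exact mul_right_cancel₀ (by norm_num) h6

lemma s2_zero : s2 0 = 0 := by simp [s2]
lemma s3_zero : s3 0 = 0 := by simp [s3]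


section
variable {G : Type*} [Group G] {x y z : G}

lemma comm_pow_left (hzy : Commute z y) (h : y * x = x * y * z) :
    ∀ a : ℤ, y ^ a * x = x * y ^ a * z ^ a := by
  have hinv : y⁻¹ * x = x * y⁻¹ * z⁻¹ := by
    have h1 : x * y = y * x * z⁻¹ := by rw [h]; group
    calc y⁻¹ * x = y⁻¹ * (x * y) * y⁻¹ := by group
    _ = y⁻¹ * (y * x * z⁻¹) * y⁻¹ := by rw [← h1]
    _ = x * (z⁻¹ * y⁻¹) := by group
    _ = x * (y⁻¹ * z⁻¹) := by rw [hzy.inv_inv.eq]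
    _ = x * y⁻¹ * z⁻¹ := by group
  intro a
  induction a using Int.induction_on with
  | zero => simp
  | succ n ih =>
    calc y ^ ((n:ℤ)+1) * x = y ^ (n:ℤ) * (y * x) := by
          rw [zpow_add_one]; group
    _ = y ^ (n:ℤ) * (x * y * z) := by rw [h]
    _ = (y ^ (n:ℤ) * x) * y * z := by group
    _ = x * y ^ (n:ℤ) * z ^ (n:ℤ) * y * z := by rw [ih]
    _ = x * y ^ (n:ℤ) * (z ^ (n:ℤ) * y) * z := by group
    _ = x * y ^ (n:ℤ) * (y * z ^ (n:ℤ)) * z := by rw [(hzy.zpow_left (n:ℤ)).eq]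
    _ = x * y ^ ((n:ℤ)+1) * z ^ ((n:ℤ)+1) := by
          rw [zpow_add_one, zpow_add_one]; group
  | pred n ih =>
    calc y ^ (-(n:ℤ)-1) * x = y ^ (-(n:ℤ)) * (y⁻¹ * x) := by
          rw [zpow_sub_one]; group
    _ = y ^ (-(n:ℤ)) * (x * y⁻¹ * z⁻¹) := by rw [hinv]
    _ = (y ^ (-(n:ℤ)) * x) * y⁻¹ * z⁻¹ := by group
    _ = x * y ^ (-(n:ℤ)) * z ^ (-(n:ℤ)) * y⁻¹ * z⁻¹ := by rw [ih]
    _ = x * y ^ (-(n:ℤ)) * (z ^ (-(n:ℤ)) * y⁻¹) * z⁻¹ := by group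
    _ = x * y ^ (-(n:ℤ)) * (y⁻¹ * z ^ (-(n:ℤ))) * z⁻¹ := by
          rw [((hzy.zpow_left (-(n:ℤ))).inv_right).eq]
    _ = x * y ^ (-(n:ℤ)-1) * z ^ (-(n:ℤ)-1) := by
          rw [zpow_sub_one, zpow_sub_one]; group

lemma comm_pow_right (hzx : Commute z x) (hzy : Commute z y) (h : y * x = x * y * z) :
    ∀ a : ℤ, y * x ^ a = x ^ a * y * z ^ a := by
  intro a
  have h' : x * y = y * x * z⁻¹ := by rw [h]; group
  have hthis := comm_pow_left (x := y) (y := x) (z := z⁻¹) hzx.inv_left h' a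
  -- hthis : x ^ a * y = y * x ^ a * z⁻¹ ^ a
  rw [inv_zpow] at hthis
  have h2 : x ^ a * y * z ^ a = y * x ^ a := by rw [hthis]; group
  exact h2.symm

lemma comm_pow_both (hzx : Commute z x) (hzy : Commute z y) (h : y * x = x * y * z)
    (a b : ℤ) : y ^ b * x ^ a = x ^ a * y ^ b * z ^ (a * b) := by
  have h1 : y * x ^ a = x ^ a * y * z ^ a := comm_pow_right hzx hzy h a
  have h2 := comm_pow_left (x := x ^ a) (y := y) (z := z ^ a) (hzy.zpow_left a).symm.symm
      (by exact h1) b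
  rw [← zpow_mul] at h2
  exact h2

lemma mul_zpow_central (hzx : Commute z x) (hzy : Commute z y) (h : y * x = x * y * z) :
    ∀ n : ℤ, (x * y) ^ n = x ^ n * y ^ n * z ^ (s2 n) := by
  have hinv2 : y * x⁻¹ = x⁻¹ * y * z⁻¹ := by
    have h1 : x⁻¹ * y = y * x⁻¹ * z := by
      calc x⁻¹ * y = x⁻¹ * (y * x) * x⁻¹ := by group
      _ = x⁻¹ * (x * y * z) * x⁻¹ := by rw [h]
      _ = y * (z * x⁻¹) := by group
      _ = y * (x⁻¹ * z) := by rw [hzx.inv_right.eq]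
      _ = y * x⁻¹ * z := by group
    rw [h1]; group
  have hb : ∀ b : ℤ, y ^ b * x⁻¹ = x⁻¹ * y ^ b * z ^ (-b) := by
    intro b
    have := comm_pow_left (x := x⁻¹) (y := y) (z := z⁻¹) hzy.inv_left hinv2 b
    rw [inv_zpow, ← zpow_neg] at this
    exact this
  intro n
  induction n using Int.induction_on with
  | zero => simp [s2]
  | succ n ih =>
    have hy : y ^ (n:ℤ) * x = x * y ^ (n:ℤ) * z ^ (n:ℤ) := comm_pow_left hzy h n
    calc (x * y) ^ ((n:ℤ)+1) = (x * y) ^ (n:ℤ) * (x * y) := by rw [zpow_add_one]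
    _ = x ^ (n:ℤ) * y ^ (n:ℤ) * (z ^ (s2 (n:ℤ)) * x) * y := by rw [ih]; group
    _ = x ^ (n:ℤ) * y ^ (n:ℤ) * (x * z ^ (s2 (n:ℤ))) * y := by
        rw [(hzx.zpow_left (s2 (n:ℤ))).eq]
    _ = x ^ (n:ℤ) * (y ^ (n:ℤ) * x) * (z ^ (s2 (n:ℤ)) * y) := by group
    _ = x ^ (n:ℤ) * (x * y ^ (n:ℤ) * z ^ (n:ℤ)) * (y * z ^ (s2 (n:ℤ))) := by
        rw [hy, (hzy.zpow_left (s2 (n:ℤ))).eq]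
    _ = x ^ ((n:ℤ)+1) * (y ^ (n:ℤ) * (z ^ (n:ℤ) * y)) * z ^ (s2 (n:ℤ)) := by
        rw [zpow_add_one]; group
    _ = x ^ ((n:ℤ)+1) * (y ^ (n:ℤ) * (y * z ^ (n:ℤ))) * z ^ (s2 (n:ℤ)) := by
        rw [(hzy.zpow_left (n:ℤ)).eq]
    _ = x ^ ((n:ℤ)+1) * y ^ ((n:ℤ)+1) * z ^ (s2 ((n:ℤ)+1)) := by
        rw [s2_succ, zpow_add, zpow_add_one]; group
  | pred n ih =>
    calc (x * y) ^ (-(n:ℤ)-1) = (x * y) ^ (-(n:ℤ)) * (x * y)⁻¹ := by rw [zpow_sub_one]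
    _ = x ^ (-(n:ℤ)) * y ^ (-(n:ℤ)) * (z ^ (s2 (-(n:ℤ))) * y⁻¹) * x⁻¹ := by
        rw [ih]; group
    _ = x ^ (-(n:ℤ)) * y ^ (-(n:ℤ)) * (y⁻¹ * z ^ (s2 (-(n:ℤ)))) * x⁻¹ := by
        rw [((hzy.zpow_left (s2 (-(n:ℤ)))).inv_right).eq]
    _ = x ^ (-(n:ℤ)) * ((y ^ (-(n:ℤ)) * y⁻¹) * (z ^ (s2 (-(n:ℤ))) * x⁻¹)) := by group
    _ = x ^ (-(n:ℤ)) * ((y ^ (-(n:ℤ)) * y⁻¹) * (x⁻¹ * z ^ (s2 (-(n:ℤ))))) := by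
        rw [((hzx.zpow_left (s2 (-(n:ℤ)))).inv_right).eq]
    _ = x ^ (-(n:ℤ)) * (y ^ (-(n:ℤ)-1) * x⁻¹) * z ^ (s2 (-(n:ℤ))) := by
        rw [← zpow_sub_one]; group
    _ = x ^ (-(n:ℤ)) * (x⁻¹ * y ^ (-(n:ℤ)-1) * z ^ (-(-(n:ℤ)-1))) * z ^ (s2 (-(n:ℤ))) := by
        rw [hb]
    _ = x ^ (-(n:ℤ)-1) * y ^ (-(n:ℤ)-1) * (z ^ ((n:ℤ)+1) * z ^ (s2 (-(n:ℤ)))) := by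
        have e : (-(-(n:ℤ)-1)) = ((n:ℤ)+1) := by ring
        rw [e, zpow_sub_one]; group
    _ = x ^ (-(n:ℤ)-1) * y ^ (-(n:ℤ)-1) * z ^ (s2 (-(n:ℤ)-1)) := by
        rw [← zpow_add]
        congr 1
        rw [s2_pred]
        ring
end


theorem g2_conjugate_by_g1_power (G : Type*) [Group G] (g1 g2 g3 g4 g5 : G)
    (t123 t124 t125 t134 t135 t145 t234 t235 t245 t345 : ℤ)
    (h21 : g2⁻¹ * g1⁻¹ * g2 * g1 = g3 ^ t123 * g4 ^ t124 * g5 ^ t125)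
    (h31 : g3⁻¹ * g1⁻¹ * g3 * g1 = g4 ^ t134 * g5 ^ t135)
    (h32 : g3⁻¹ * g2⁻¹ * g3 * g2 = g4 ^ t234 * g5 ^ t235)
    (h41 : g4⁻¹ * g1⁻¹ * g4 * g1 = g5 ^ t145)
    (h42 : g4⁻¹ * g2⁻¹ * g4 * g2 = g5 ^ t245)
    (h43 : g4⁻¹ * g3⁻¹ * g4 * g3 = g5 ^ t345)
    (h51 : g5⁻¹ * g1⁻¹ * g5 * g1 = 1)
    (h52 : g5⁻¹ * g2⁻¹ * g5 * g2 = 1)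
    (h53 : g5⁻¹ * g3⁻¹ * g5 * g3 = 1)
    (h54 : g5⁻¹ * g4⁻¹ * g5 * g4 = 1)
    (hcons : t123 * t345 = 0) :
    ∀ y : ℤ,
      g1 ^ (-y) * g2 * g1 ^ y
        = g2 * g3 ^ (y * t123) * g4 ^ (y * t124 + s2 y * t123 * t134)
            * g5 ^ (y * t125 + s2 y * (t123 * t135 + t124 * t145)
                    + s3 y * t123 * t134 * t145) := by
  -- centrality of g5
  have c51 : g5 * g1 = g1 * g5 := by
    have := congrArg (fun w => g1 * g5 * w) h51
    simpa [mul_assoc] using this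
  have c53 : g5 * g3 = g3 * g5 := by
    have := congrArg (fun w => g3 * g5 * w) h53
    simpa [mul_assoc] using this
  have c54 : g5 * g4 = g4 * g5 := by
    have := congrArg (fun w => g4 * g5 * w) h54
    simpa [mul_assoc] using this
  have cm53 : Commute g5 g3 := c53
  have cm54 : Commute g5 g4 := c54
  have cm45 : Commute g4 g5 := cm54.symm
  -- basic conjugation relations
  have r21 : g1⁻¹ * g2 * g1 = g2 * g3 ^ t123 * g4 ^ t124 * g5 ^ t125 := by
    have := congrArg (fun w => g2 * w) h21
    simpa [mul_assoc] using this
  have r31 : g1⁻¹ * g3 * g1 = g3 * g4 ^ t134 * g5 ^ t135 := by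
    have := congrArg (fun w => g3 * w) h31
    simpa [mul_assoc] using this
  have r41 : g1⁻¹ * g4 * g1 = g4 * g5 ^ t145 := by
    have := congrArg (fun w => g4 * w) h41
    simpa [mul_assoc] using this
  have r51 : g1⁻¹ * g5 * g1 = g5 := by
    calc g1⁻¹ * g5 * g1 = g1⁻¹ * (g5 * g1) := by group
    _ = g1⁻¹ * (g1 * g5) := by rw [c51]
    _ = g5 := by group
  have r43 : g4 * g3 = g3 * g4 * g5 ^ t345 := by
    have := congrArg (fun w => g3 * g4 * w) h43
    simpa [mul_assoc] using this
  -- power swap lemmas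
  have sw : ∀ a b : ℤ, g4 ^ b * g3 ^ a = g3 ^ a * g4 ^ b * (g5 ^ t345) ^ (a * b) :=
    fun a b => comm_pow_both (cm53.zpow_left t345) (cm54.zpow_left t345) r43 a b
  have pw4 : ∀ b : ℤ, (g4 * g5 ^ t145) ^ b = g4 ^ b * g5 ^ (t145 * b) := by
    intro b
    rw [(cm45.zpow_right t145).mul_zpow, ← zpow_mul]
  have pw3 : ∀ a : ℤ, (g3 * g4 ^ t134 * g5 ^ t135) ^ a
      = g3 ^ a * g4 ^ (t134 * a) * g5 ^ (t135 * a + t345 * t134 * s2 a) := by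
    intro a
    have hyx : g4 ^ t134 * g3 = g3 * g4 ^ t134 * (g5 ^ t345) ^ t134 :=
      comm_pow_left (cm54.zpow_left t345) r43 t134
    have hrel : (g4 ^ t134 * g5 ^ t135) * g3
        = g3 * (g4 ^ t134 * g5 ^ t135) * g5 ^ (t345 * t134) := by
      calc (g4 ^ t134 * g5 ^ t135) * g3 = g4 ^ t134 * (g5 ^ t135 * g3) := by group
      _ = g4 ^ t134 * (g3 * g5 ^ t135) := by rw [(cm53.zpow_left t135).eq]
      _ = (g4 ^ t134 * g3) * g5 ^ t135 := by group
      _ = (g3 * g4 ^ t134 * (g5 ^ t345) ^ t134) * g5 ^ t135 := by rw [hyx]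
      _ = g3 * (g4 ^ t134 * g5 ^ t135) * g5 ^ (t345 * t134) := by
          rw [← zpow_mul]; group
    have hzx : Commute (g5 ^ (t345 * t134)) g3 := cm53.zpow_left _
    have hzy : Commute (g5 ^ (t345 * t134)) (g4 ^ t134 * g5 ^ t135) :=
      ((cm54.zpow_left _).zpow_right _).mul_right
        (((Commute.refl g5).zpow_left _).zpow_right _)
    have h0 := mul_zpow_central hzx hzy hrel a
    have h1 : (g4 ^ t134 * g5 ^ t135) ^ a = g4 ^ (t134 * a) * g5 ^ (t135 * a) := by
      rw [((cm45.zpow_left t134).zpow_right t135).mul_zpow, ← zpow_mul, ← zpow_mul]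
    calc (g3 * g4 ^ t134 * g5 ^ t135) ^ a
        = (g3 * (g4 ^ t134 * g5 ^ t135)) ^ a := by rw [mul_assoc]
    _ = g3 ^ a * (g4 ^ t134 * g5 ^ t135) ^ a * (g5 ^ (t345 * t134)) ^ (s2 a) := h0
    _ = g3 ^ a * (g4 ^ (t134 * a) * g5 ^ (t135 * a)) * (g5 ^ (t345 * t134)) ^ (s2 a) := by
        rw [h1]
    _ = g3 ^ a * g4 ^ (t134 * a) * g5 ^ (t135 * a + t345 * t134 * s2 a) := by
        rw [← zpow_mul]; group
  -- normal form multiplication lemmas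
  have nfB : ∀ a b c b' c' : ℤ, (g3 ^ a * g4 ^ b * g5 ^ c) * (g4 ^ b' * g5 ^ c')
      = g3 ^ a * g4 ^ (b + b') * g5 ^ (c + c') := by
    intro a b c b' c'
    calc (g3 ^ a * g4 ^ b * g5 ^ c) * (g4 ^ b' * g5 ^ c')
        = g3 ^ a * g4 ^ b * (g5 ^ c * g4 ^ b') * g5 ^ c' := by group
    _ = g3 ^ a * g4 ^ b * (g4 ^ b' * g5 ^ c) * g5 ^ c' := by
        rw [((cm54.zpow_left c).zpow_right b').eq]
    _ = g3 ^ a * g4 ^ (b + b') * g5 ^ (c + c') := by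
        rw [zpow_add, zpow_add]; group
  have nfA : ∀ a b c a' b' c' : ℤ, (g3 ^ a * g4 ^ b * g5 ^ c) * (g3 ^ a' * g4 ^ b' * g5 ^ c')
      = g3 ^ (a + a') * g4 ^ (b + b') * g5 ^ (c + c' + t345 * (a' * b)) := by
    intro a b c a' b' c'
    calc (g3 ^ a * g4 ^ b * g5 ^ c) * (g3 ^ a' * g4 ^ b' * g5 ^ c')
        = g3 ^ a * g4 ^ b * (g5 ^ c * g3 ^ a') * (g4 ^ b' * g5 ^ c') := by group
    _ = g3 ^ a * g4 ^ b * (g3 ^ a' * g5 ^ c) * (g4 ^ b' * g5 ^ c') := by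
        rw [((cm53.zpow_left c).zpow_right a').eq]
    _ = g3 ^ a * (g4 ^ b * g3 ^ a') * (g5 ^ c * g4 ^ b') * g5 ^ c' := by group
    _ = g3 ^ a * (g3 ^ a' * g4 ^ b * (g5 ^ t345) ^ (a' * b)) * (g4 ^ b' * g5 ^ c) * g5 ^ c' := by
        rw [sw a' b, ((cm54.zpow_left c).zpow_right b').eq]
    _ = g3 ^ (a + a') * (g4 ^ b * ((g5 ^ t345) ^ (a' * b) * g4 ^ b')) * (g5 ^ c * g5 ^ c') := by
        rw [zpow_add]; group
    _ = g3 ^ (a + a') * (g4 ^ b * (g4 ^ b' * (g5 ^ t345) ^ (a' * b))) * (g5 ^ c * g5 ^ c') := by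
        rw [(((cm54.zpow_left t345).zpow_left (a' * b)).zpow_right b').eq]
    _ = g3 ^ (a + a') * g4 ^ (b + b') * g5 ^ (c + c' + t345 * (a' * b)) := by
        rw [zpow_add, zpow_add, zpow_add, ← zpow_mul]; group
  -- conjugation of powers
  have cz : ∀ (u : G) (a : ℤ), g1⁻¹ * u ^ a * g1 = (g1⁻¹ * u * g1) ^ a := by
    intro u a
    have := map_zpow (MulAut.conj g1⁻¹) u a
    simpa [MulAut.conj_apply] using this
  -- vanishing exponents
  have hz1 : ∀ w : ℤ, t345 * t134 * s2 (w * t123) = 0 := by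
    intro w
    rcases mul_eq_zero.mp hcons with h0 | h0 <;> simp [h0, s2]
  have hz2 : ∀ w : ℤ, t345 * (w * t123 * t124) = 0 := by
    intro w
    rcases mul_eq_zero.mp hcons with h0 | h0 <;> simp [h0]
  -- the key induction step
  have key : ∀ w : ℤ,
      g1⁻¹ * (g2 * g3 ^ (w * t123) * g4 ^ (w * t124 + s2 w * t123 * t134)
        * g5 ^ (w * t125 + s2 w * (t123 * t135 + t124 * t145)
            + s3 w * t123 * t134 * t145)) * g1
      = g2 * g3 ^ ((w + 1) * t123) * g4 ^ ((w + 1) * t124 + s2 (w + 1) * t123 * t134)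
        * g5 ^ ((w + 1) * t125 + s2 (w + 1) * (t123 * t135 + t124 * t145)
            + s3 (w + 1) * t123 * t134 * t145) := by
    intro w
    have e3 : t123 + w * t123 = (w + 1) * t123 := by ring
    have e4 : t124 + (t134 * (w * t123) + (w * t124 + s2 w * t123 * t134))
        = (w + 1) * t124 + s2 (w + 1) * t123 * t134 := by
      rw [s2_succ]; ring
    have e5 : t125 + (t135 * (w * t123) + t345 * t134 * s2 (w * t123)
          + (t145 * (w * t124 + s2 w * t123 * t134)
            + (w * t125 + s2 w * (t123 * t135 + t124 * t145)
              + s3 w * t123 * t134 * t145)))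
          + t345 * (w * t123 * t124)
        = (w + 1) * t125 + s2 (w + 1) * (t123 * t135 + t124 * t145)
          + s3 (w + 1) * t123 * t134 * t145 := by
      rw [s2_succ, s3_succ]
      linear_combination hz1 w + hz2 w
    calc g1⁻¹ * (g2 * g3 ^ (w * t123) * g4 ^ (w * t124 + s2 w * t123 * t134)
          * g5 ^ (w * t125 + s2 w * (t123 * t135 + t124 * t145)
              + s3 w * t123 * t134 * t145)) * g1
        = (g1⁻¹ * g2 * g1) * (g1⁻¹ * g3 ^ (w * t123) * g1)
          * (g1⁻¹ * g4 ^ (w * t124 + s2 w * t123 * t134) * g1)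
          * (g1⁻¹ * g5 ^ (w * t125 + s2 w * (t123 * t135 + t124 * t145)
              + s3 w * t123 * t134 * t145) * g1) := by group
    _ = (g1⁻¹ * g2 * g1) * (g1⁻¹ * g3 * g1) ^ (w * t123)
          * (g1⁻¹ * g4 * g1) ^ (w * t124 + s2 w * t123 * t134)
          * (g1⁻¹ * g5 * g1) ^ (w * t125 + s2 w * (t123 * t135 + t124 * t145)
              + s3 w * t123 * t134 * t145) := by rw [cz, cz, cz]
    _ = (g2 * g3 ^ t123 * g4 ^ t124 * g5 ^ t125)
          * (g3 * g4 ^ t134 * g5 ^ t135) ^ (w * t123)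
          * (g4 * g5 ^ t145) ^ (w * t124 + s2 w * t123 * t134)
          * g5 ^ (w * t125 + s2 w * (t123 * t135 + t124 * t145)
              + s3 w * t123 * t134 * t145) := by rw [r21, r31, r41, r51]
    _ = g2 * ((g3 ^ t123 * g4 ^ t124 * g5 ^ t125)
          * ((g3 ^ (w * t123) * g4 ^ (t134 * (w * t123))
              * g5 ^ (t135 * (w * t123) + t345 * t134 * s2 (w * t123)))
            * ((g4 ^ (w * t124 + s2 w * t123 * t134)
              * g5 ^ (t145 * (w * t124 + s2 w * t123 * t134)))
              * g5 ^ (w * t125 + s2 w * (t123 * t135 + t124 * t145)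
                  + s3 w * t123 * t134 * t145)))) := by
        rw [pw3, pw4]; group
    _ = g2 * ((g3 ^ t123 * g4 ^ t124 * g5 ^ t125)
          * ((g3 ^ (w * t123) * g4 ^ (t134 * (w * t123))
              * g5 ^ (t135 * (w * t123) + t345 * t134 * s2 (w * t123)))
            * (g4 ^ (w * t124 + s2 w * t123 * t134)
              * g5 ^ (t145 * (w * t124 + s2 w * t123 * t134)
                  + (w * t125 + s2 w * (t123 * t135 + t124 * t145)
                    + s3 w * t123 * t134 * t145))))) := by
        group
    _ = g2 * ((g3 ^ t123 * g4 ^ t124 * g5 ^ t125)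
          * (g3 ^ (w * t123) * g4 ^ (t134 * (w * t123) + (w * t124 + s2 w * t123 * t134))
              * g5 ^ (t135 * (w * t123) + t345 * t134 * s2 (w * t123)
                + (t145 * (w * t124 + s2 w * t123 * t134)
                  + (w * t125 + s2 w * (t123 * t135 + t124 * t145)
                    + s3 w * t123 * t134 * t145))))) := by
        rw [nfB]
    _ = g2 * (g3 ^ (t123 + w * t123)
          * g4 ^ (t124 + (t134 * (w * t123) + (w * t124 + s2 w * t123 * t134)))
          * g5 ^ (t125 + (t135 * (w * t123) + t345 * t134 * s2 (w * t123)
                + (t145 * (w * t124 + s2 w * t123 * t134)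
                  + (w * t125 + s2 w * (t123 * t135 + t124 * t145)
                    + s3 w * t123 * t134 * t145)))
              + t345 * (w * t123 * t124))) := by
        rw [nfA]
    _ = g2 * g3 ^ ((w + 1) * t123) * g4 ^ ((w + 1) * t124 + s2 (w + 1) * t123 * t134)
          * g5 ^ ((w + 1) * t125 + s2 (w + 1) * (t123 * t135 + t124 * t145)
              + s3 (w + 1) * t123 * t134 * t145) := by
        rw [e3, e4, e5]; group
  -- main induction
  intro y
  induction y using Int.induction_on with
  | zero => norm_num [s2, s3]
  | succ n ih =>
    have h1 : g1 ^ (-((n : ℤ) + 1)) * g2 * g1 ^ ((n : ℤ) + 1)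
        = g1⁻¹ * (g1 ^ (-(n : ℤ)) * g2 * g1 ^ (n : ℤ)) * g1 := by group
    rw [h1, ih]
    exact key (n : ℤ)
  | pred n ih =>
    have hk := key (-(n : ℤ) - 1)
    have e : (-(n : ℤ) - 1) + 1 = -(n : ℤ) := by ring
    rw [e, ← ih] at hk
    have h3 : ∀ u : G, g1⁻¹ * u * g1 = g1 ^ (- -(n : ℤ)) * g2 * g1 ^ (-(n : ℤ))
        → g1 ^ (-(-(n : ℤ) - 1)) * g2 * g1 ^ (-(n : ℤ) - 1) = u := by
      intro u hu
      have h4 : u = g1 * (g1⁻¹ * u * g1) * g1⁻¹ := by group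
      rw [h4, hu]; group
    exact h3 _ hk
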